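/- In the degenerate affine periplectic Brauer algebra sVV_n (n ≥ 2), for every 1 ≤ i ≤ n−1 and all natural numbers a, b the following identities hold: (i) s_i·y_{i+1}^b·e_i = −y_{i+1}^b·e_i; (ii) s_i·y_i^a·e_i = −y_i^a·e_i; (iii) e_i·y_{i+1}^b·s_i = e_i·y_{i+1}^b; (iv) e_i·y_i^a·s_i = e_i·y_i^a; (v) e_i·y_i^a·y_{i+1}^b·s_i = Σ_{k=0}^{b} (b choose k)·e_i·y_i^{a+k}; (vi) s_i·y_i^a·y_{i+1}^b·e_i = −Σ_{k=0}^{a} (a choose k)·y_{i+1}^{b+k}·e_i. -/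
import Mathlib


noncomputable section

namespace Periplectic

/-- Generators of the degenerate affine periplectic Brauer algebra on `n` strands:
`S i` for `1 ≤ i ≤ n-1`, `E i` for `1 ≤ i ≤ n-1`, `Y j` for `1 ≤ j ≤ n`. -/
inductive Gen (n : ℕ) : Type
  | S (i : ℕ) (h : 1 ≤ i ∧ i ≤ n - 1) : Gen n
  | E (i : ℕ) (h : 1 ≤ i ∧ i ≤ n - 1) : Gen n
  | Y (j : ℕ) (h : 1 ≤ j ∧ j ≤ n) : Gen n

/-- The free `ℂ`-algebra on the generators. -/
abbrev FA (n : ℕ) : Type := FreeAlgebra ℂ (Gen n)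

def fS (n i : ℕ) (h : 1 ≤ i ∧ i ≤ n - 1) : FA n := FreeAlgebra.ι ℂ (Gen.S i h)
def fE (n i : ℕ) (h : 1 ≤ i ∧ i ≤ n - 1) : FA n := FreeAlgebra.ι ℂ (Gen.E i h)
def fY (n j : ℕ) (h : 1 ≤ j ∧ j ≤ n) : FA n := FreeAlgebra.ι ℂ (Gen.Y j h)

/-- The defining relations of the degenerate affine periplectic Brauer algebra. -/
inductive Rel (n : ℕ) : FA n → FA n → Prop
  /- (VV1)  s_i² = 1 -/
  | s_sq (i : ℕ) (h : 1 ≤ i ∧ i ≤ n - 1) :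
      Rel n (fS n i h * fS n i h) 1
  /- (VV2)(i)  s_i e_j = e_j s_i for |i-j| > 1 -/
  | se_comm (i j : ℕ) (hi : 1 ≤ i ∧ i ≤ n - 1) (hj : 1 ≤ j ∧ j ≤ n - 1)
      (hij : i + 1 < j ∨ j + 1 < i) :
      Rel n (fS n i hi * fE n j hj) (fE n j hj * fS n i hi)
  /- (VV2)(ii)  e_i e_j = e_j e_i for |i-j| > 1 -/
  | ee_comm (i j : ℕ) (hi : 1 ≤ i ∧ i ≤ n - 1) (hj : 1 ≤ j ∧ j ≤ n - 1)
      (hij : i + 1 < j ∨ j + 1 < i) :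
      Rel n (fE n i hi * fE n j hj) (fE n j hj * fE n i hi)
  /- (VV2)(iii)  e_i y_j = y_j e_i for j ∉ {i, i+1} -/
  | ey_comm (i j : ℕ) (hi : 1 ≤ i ∧ i ≤ n - 1) (hj : 1 ≤ j ∧ j ≤ n)
      (hij : j ≠ i ∧ j ≠ i + 1) :
      Rel n (fE n i hi * fY n j hj) (fY n j hj * fE n i hi)
  /- (VV2)(iv)  y_i y_j = y_j y_i -/
  | yy_comm (i j : ℕ) (hi : 1 ≤ i ∧ i ≤ n) (hj : 1 ≤ j ∧ j ≤ n) :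
      Rel n (fY n i hi * fY n j hj) (fY n j hj * fY n i hi)
  /- (VV3)(i)  s_i s_j = s_j s_i for |i-j| > 1 -/
  | ss_comm (i j : ℕ) (hi : 1 ≤ i ∧ i ≤ n - 1) (hj : 1 ≤ j ∧ j ≤ n - 1)
      (hij : i + 1 < j ∨ j + 1 < i) :
      Rel n (fS n i hi * fS n j hj) (fS n j hj * fS n i hi)
  /- (VV3)(ii)  braid relation -/
  | braid (i : ℕ) (hi : 1 ≤ i ∧ i ≤ n - 1) (hi1 : 1 ≤ i + 1 ∧ i + 1 ≤ n - 1) :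
      Rel n (fS n i hi * fS n (i+1) hi1 * fS n i hi)
            (fS n (i+1) hi1 * fS n i hi * fS n (i+1) hi1)
  /- (VV3)(iii)  s_i y_j = y_j s_i for j ∉ {i, i+1} -/
  | sy_comm (i j : ℕ) (hi : 1 ≤ i ∧ i ≤ n - 1) (hj : 1 ≤ j ∧ j ≤ n)
      (hij : j ≠ i ∧ j ≠ i + 1) :
      Rel n (fS n i hi * fY n j hj) (fY n j hj * fS n i hi)
  /- (VV4)(i)  e_{i+1} e_i e_{i+1} = -e_{i+1} -/
  | eee_up (i : ℕ) (hi : 1 ≤ i ∧ i ≤ n - 1) (hi1 : 1 ≤ i + 1 ∧ i + 1 ≤ n - 1) :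
      Rel n (fE n (i+1) hi1 * fE n i hi * fE n (i+1) hi1) (-(fE n (i+1) hi1))
  /- (VV4)(ii)  e_i e_{i+1} e_i = -e_i -/
  | eee_down (i : ℕ) (hi : 1 ≤ i ∧ i ≤ n - 1) (hi1 : 1 ≤ i + 1 ∧ i + 1 ≤ n - 1) :
      Rel n (fE n i hi * fE n (i+1) hi1 * fE n i hi) (-(fE n i hi))
  /- (VV5)(i)  e_i s_i = e_i  and  s_i e_i = -e_i -/
  | es (i : ℕ) (hi : 1 ≤ i ∧ i ≤ n - 1) :
      Rel n (fE n i hi * fS n i hi) (fE n i hi)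
  | se (i : ℕ) (hi : 1 ≤ i ∧ i ≤ n - 1) :
      Rel n (fS n i hi * fE n i hi) (-(fE n i hi))
  /- (VV5)(ii)  s_i e_{i+1} e_i = s_{i+1} e_i -/
  | see (i : ℕ) (hi : 1 ≤ i ∧ i ≤ n - 1) (hi1 : 1 ≤ i + 1 ∧ i + 1 ≤ n - 1) :
      Rel n (fS n i hi * fE n (i+1) hi1 * fE n i hi) (fS n (i+1) hi1 * fE n i hi)
  /- (VV5)(iii)  s_{i+1} e_i e_{i+1} = -s_i e_{i+1} -/
  | see' (i : ℕ) (hi : 1 ≤ i ∧ i ≤ n - 1) (hi1 : 1 ≤ i + 1 ∧ i + 1 ≤ n - 1) :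
      Rel n (fS n (i+1) hi1 * fE n i hi * fE n (i+1) hi1) (-(fS n i hi * fE n (i+1) hi1))
  /- (VV5)(iv)  e_{i+1} e_i s_{i+1} = e_{i+1} s_i -/
  | ees (i : ℕ) (hi : 1 ≤ i ∧ i ≤ n - 1) (hi1 : 1 ≤ i + 1 ∧ i + 1 ≤ n - 1) :
      Rel n (fE n (i+1) hi1 * fE n i hi * fS n (i+1) hi1) (fE n (i+1) hi1 * fS n i hi)
  /- (VV5)(v)  e_i e_{i+1} s_i = -e_i s_{i+1} -/
  | ees' (i : ℕ) (hi : 1 ≤ i ∧ i ≤ n - 1) (hi1 : 1 ≤ i + 1 ∧ i + 1 ≤ n - 1) :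
      Rel n (fE n i hi * fE n (i+1) hi1 * fS n i hi) (-(fE n i hi * fS n (i+1) hi1))
  /- (VV6)  e_i² = 0 -/
  | e_sq (i : ℕ) (hi : 1 ≤ i ∧ i ≤ n - 1) :
      Rel n (fE n i hi * fE n i hi) 0
  /- (VV7)(i)  s_i y_i - y_{i+1} s_i = -e_i - 1 -/
  | sy_rel (i : ℕ) (hi : 1 ≤ i ∧ i ≤ n - 1) (hyi : 1 ≤ i ∧ i ≤ n)
      (hyi1 : 1 ≤ i + 1 ∧ i + 1 ≤ n) :
      Rel n (fS n i hi * fY n i hyi - fY n (i+1) hyi1 * fS n i hi) (-(fE n i hi) - 1)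
  /- (VV7)(ii)  y_i s_i - s_i y_{i+1} = e_i - 1 -/
  | ys_rel (i : ℕ) (hi : 1 ≤ i ∧ i ≤ n - 1) (hyi : 1 ≤ i ∧ i ≤ n)
      (hyi1 : 1 ≤ i + 1 ∧ i + 1 ≤ n) :
      Rel n (fY n i hyi * fS n i hi - fS n i hi * fY n (i+1) hyi1) (fE n i hi - 1)
  /- (VV8)(i)  e_i (y_i - y_{i+1}) = -e_i -/
  | e_ydiff (i : ℕ) (hi : 1 ≤ i ∧ i ≤ n - 1) (hyi : 1 ≤ i ∧ i ≤ n)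
      (hyi1 : 1 ≤ i + 1 ∧ i + 1 ≤ n) :
      Rel n (fE n i hi * (fY n i hyi - fY n (i+1) hyi1)) (-(fE n i hi))
  /- (VV8)(ii)  (y_i - y_{i+1}) e_i = e_i -/
  | ydiff_e (i : ℕ) (hi : 1 ≤ i ∧ i ≤ n - 1) (hyi : 1 ≤ i ∧ i ≤ n)
      (hyi1 : 1 ≤ i + 1 ∧ i + 1 ≤ n) :
      Rel n ((fY n i hyi - fY n (i+1) hyi1) * fE n i hi) (fE n i hi)

/-- The degenerate affine periplectic Brauer algebra `sVV n`. -/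
abbrev sVV (n : ℕ) : Type := RingQuot (Rel n)

/-- The generator `s_i` of `sVV n`. -/
def sgen (n i : ℕ) (h : 1 ≤ i ∧ i ≤ n - 1) : sVV n :=
  RingQuot.mkAlgHom ℂ (Rel n) (fS n i h)

/-- The generator `e_i` of `sVV n`. -/
def egen (n i : ℕ) (h : 1 ≤ i ∧ i ≤ n - 1) : sVV n :=
  RingQuot.mkAlgHom ℂ (Rel n) (fE n i h)

/-- The generator `y_j` of `sVV n`. -/
def ygen (n j : ℕ) (h : 1 ≤ j ∧ j ≤ n) : sVV n :=
  RingQuot.mkAlgHom ℂ (Rel n) (fY n j h)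

/-- Total version of `s_i` (equal to `sgen n i _` when `1 ≤ i ≤ n-1`, and `0` otherwise). -/
def ss (n i : ℕ) : sVV n := if h : 1 ≤ i ∧ i ≤ n - 1 then sgen n i h else 0

/-- Total version of `e_i`. -/
def ee (n i : ℕ) : sVV n := if h : 1 ≤ i ∧ i ≤ n - 1 then egen n i h else 0

/-- Total version of `y_j`. -/
def yy (n j : ℕ) : sVV n := if h : 1 ≤ j ∧ j ≤ n then ygen n j h else 0


section Abstract

variable {A : Type*} [Ring A] [Algebra ℂ A]

private theorem half_zero (u : A) (hu : u + u = 0) : u = 0 := by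
  have h2 : (2 : ℂ) • u = 0 := by rw [two_smul]; exact hu
  calc u = ((2 : ℂ)⁻¹ * 2) • u := by norm_num
    _ = (2 : ℂ)⁻¹ • ((2 : ℂ) • u) := by rw [mul_smul]
    _ = 0 := by rw [h2, smul_zero]

theorem abstract_dis (S E X Z : A)
    (hes : E * S = E) (hse : S * E = -E) (he2 : E * E = 0)
    (hzs : Z * S = S * X + E + 1) (hsz : S * Z = X * S - E + 1)
    (hex : E * X = E * Z - E) (hxe : X * E = Z * E + E) (hxz : X * Z = Z * X)
    (a b : ℕ) :
    S * Z ^ b * E = -(Z ^ b * E) ∧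
    S * X ^ a * E = -(X ^ a * E) ∧
    E * Z ^ b * S = E * Z ^ b ∧
    E * X ^ a * S = E * X ^ a ∧
    E * X ^ a * Z ^ b * S = ∑ k ∈ Finset.range (b+1), (b.choose k) • (E * X ^ (a + k)) ∧
    S * X ^ a * Z ^ b * E = -∑ k ∈ Finset.range (a+1), (a.choose k) • (Z ^ (b + k) * E) := by
  have cXZ : Commute X Z := hxz
  have hsx' : S * X = Z * S - E - 1 := by rw [hzs]; abel
  have hxs' : X * S = S * Z + E - 1 := by rw [hsz]; abel
  have hze : Z * E = X * E - E := by rw [hxe]; abel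
  -- L1 : e z^m s = e z^m and e z^m e = 0
  have L1 : ∀ m : ℕ, E * Z ^ m * S = E * Z ^ m ∧ E * Z ^ m * E = 0 := by
    intro m
    induction m with
    | zero => simpa using ⟨hes, he2⟩
    | succ m ih =>
      obtain ⟨ih1, ih2⟩ := ih
      have comm : E * Z ^ m * X = E * X * Z ^ m := by
        rw [mul_assoc, ← (cXZ.pow_right m).eq, ← mul_assoc]
      have h1 : E * Z ^ (m+1) * S = E * Z ^ (m+1) := by
        have e1 : E * Z ^ (m+1) * S = E * Z ^ m * (S * X) + E * Z ^ m * E + E * Z ^ m := by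
          rw [pow_succ, show E * (Z ^ m * Z) * S = E * Z ^ m * (Z * S) by noncomm_ring, hzs]
          noncomm_ring
        have e2 : E * Z ^ m * (S * X) = E * Z ^ (m+1) - E * Z ^ m := by
          rw [← mul_assoc, ih1, comm, hex, sub_mul, mul_assoc, ← pow_succ']
        rw [e1, e2, ih2]; abel
      have h2 : E * Z ^ (m+1) * E = 0 := by
        apply half_zero
        have key : E * Z ^ (m+1) * E = -(E * Z ^ (m+1) * E) := by
          conv_lhs => rw [← h1, mul_assoc (E * Z ^ (m+1)) S E, hse, mul_neg]
        rw [add_eq_zero_iff_eq_neg]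
        exact key
      exact ⟨h1, h2⟩
  -- L2 : s z^m e = -(z^m e)
  have L2 : ∀ m : ℕ, S * Z ^ m * E = -(Z ^ m * E) := by
    intro m
    induction m with
    | zero => simpa using hse
    | succ m ih =>
      have e1 : S * Z ^ (m+1) * E = X * (S * Z ^ m * E) - E * Z ^ m * E + Z ^ m * E := by
        have h0 : S * Z ^ (m+1) = (X * S - E + 1) * Z ^ m := by
          rw [pow_succ', ← mul_assoc, hsz]
        rw [show S * Z ^ (m+1) * E = S * Z ^ (m+1) * E from rfl, h0]
        noncomm_ring
      have e2 : Z ^ (m+1) * E = X * (Z ^ m * E) - Z ^ m * E := by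
        rw [pow_succ, mul_assoc (Z ^ m) Z E, hze, mul_sub, ← mul_assoc (Z ^ m) X E,
          ← (cXZ.pow_right m).eq, mul_assoc X (Z ^ m) E]
      rw [e1, ih, (L1 m).2, e2]
      noncomm_ring
  -- key rewriting : E * X^(p+1) = E * X^p * Z - E * X^p
  have hEXsucc : ∀ p : ℕ, E * X ^ (p+1) = E * X ^ p * Z - E * X ^ p := by
    intro p
    rw [pow_succ', ← mul_assoc E X (X ^ p), hex, sub_mul, mul_assoc E Z (X ^ p),
      (cXZ.symm.pow_right p).eq, ← mul_assoc E (X ^ p) Z]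
  -- L3 : e x^p z^q e = 0
  have L3 : ∀ p q : ℕ, E * X ^ p * Z ^ q * E = 0 := by
    intro p
    induction p with
    | zero => intro q; simpa using (L1 q).2
    | succ p ih =>
      intro q
      have e1 : E * X ^ (p+1) * Z ^ q * E
          = E * X ^ p * Z ^ (q+1) * E - E * X ^ p * Z ^ q * E := by
        calc E * X ^ (p+1) * Z ^ q * E = (E * X ^ p * Z - E * X ^ p) * Z ^ q * E := by
              rw [hEXsucc p]
          _ = E * X ^ p * Z ^ (q+1) * E - E * X ^ p * Z ^ q * E := by
              rw [sub_mul, sub_mul, mul_assoc (E * X ^ p) Z (Z ^ q), ← pow_succ']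
      rw [e1, ih (q+1), ih q, sub_zero]
  have L3' : ∀ p : ℕ, E * X ^ p * E = 0 := fun p => by simpa using L3 p 0
  -- L4 : s x^p e = -(x^p e)
  have L4 : ∀ p : ℕ, S * X ^ p * E = -(X ^ p * E) := by
    intro p
    induction p with
    | zero => simpa using hse
    | succ p ih =>
      have e1 : S * X ^ (p+1) * E = Z * (S * X ^ p * E) - E * X ^ p * E - X ^ p * E := by
        have h0 : S * X ^ (p+1) = (Z * S - E - 1) * X ^ p := by
          rw [pow_succ', ← mul_assoc S X (X ^ p), hsx']
        rw [h0]; noncomm_ring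
      have e2 : X ^ (p+1) * E = Z * (X ^ p * E) + X ^ p * E := by
        rw [pow_succ, mul_assoc (X ^ p) X E, hxe, mul_add, ← mul_assoc (X ^ p) Z E,
          ← (cXZ.symm.pow_right p).eq, mul_assoc Z (X ^ p) E]
      rw [e1, ih, L3' p, e2]
      noncomm_ring
  -- L5 : e x^p s = e x^p
  have L5 : ∀ p : ℕ, E * X ^ p * S = E * X ^ p := by
    intro p
    induction p with
    | zero => simpa using hes
    | succ p ih =>
      have e1 : E * X ^ (p+1) * S = E * X ^ p * S * Z + E * X ^ p * E - E * X ^ p := by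
        have h0 : E * X ^ (p+1) * S = E * X ^ p * (X * S) := by
          rw [pow_succ, ← mul_assoc E (X ^ p) X, mul_assoc (E * X ^ p) X S]
        rw [h0, hxs']; noncomm_ring
      rw [e1, ih, L3' p, hEXsucc p]
      abel
  -- L6 : e z^q = e (x+1)^q
  have cX1Z : Commute (X + 1) Z := Commute.add_left cXZ (Commute.one_left Z)
  have hEZ1 : E * Z = E * (X + 1) := by rw [mul_add, mul_one, hex]; abel
  have L6 : ∀ q : ℕ, E * Z ^ q = E * (X + 1) ^ q := by
    intro q; induction q with
    | zero => simp
    | succ q ih =>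
      calc E * Z ^ (q+1) = E * Z ^ q * Z := by rw [pow_succ, mul_assoc]
        _ = E * (X+1) ^ q * Z := by rw [ih]
        _ = E * Z * (X+1) ^ q := by
            rw [mul_assoc E ((X+1) ^ q) Z, (cX1Z.pow_left q).eq, ← mul_assoc]
        _ = E * (X+1) * (X+1) ^ q := by rw [hEZ1]
        _ = E * (X+1) ^ (q+1) := by rw [mul_assoc, ← pow_succ']
  -- L7 : x^p e = (z+1)^p e
  have cXZ1 : Commute X (Z + 1) := Commute.add_right cXZ (Commute.one_right X)
  have hX1E : X * E = (Z + 1) * E := by rw [add_mul, one_mul, hxe]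
  have L7 : ∀ p : ℕ, X ^ p * E = (Z + 1) ^ p * E := by
    intro p; induction p with
    | zero => simp
    | succ p ih =>
      calc X ^ (p+1) * E = X * (X ^ p * E) := by rw [pow_succ', mul_assoc]
        _ = X * ((Z+1) ^ p * E) := by rw [ih]
        _ = (Z+1) ^ p * (X * E) := by
            rw [← mul_assoc, (cXZ1.pow_right p).eq, mul_assoc]
        _ = (Z+1) ^ p * ((Z+1) * E) := by rw [hX1E]
        _ = (Z+1) ^ (p+1) * E := by rw [← mul_assoc, ← pow_succ]
  -- expansion for (v)
  have expandV : E * X ^ a * Z ^ b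
      = ∑ k ∈ Finset.range (b+1), (b.choose k) • (E * X ^ (a + k)) := by
    have h1 : E * X ^ a * Z ^ b = E * Z ^ b * X ^ a := by
      rw [mul_assoc E (X ^ a) (Z ^ b), (cXZ.pow_pow a b).eq, ← mul_assoc]
    rw [h1, L6 b, (Commute.one_right X).add_pow b, Finset.mul_sum, Finset.sum_mul]
    refine Finset.sum_congr rfl fun k _ => ?_
    calc E * (X ^ k * 1 ^ (b-k) * ((b.choose k : ℕ) : A)) * X ^ a
        = E * X ^ k * ((b.choose k : ℕ) : A) * X ^ a := by
          rw [one_pow, mul_one, ← mul_assoc]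
      _ = ((b.choose k : ℕ) : A) * (E * X ^ k) * X ^ a := by
          rw [← (Nat.cast_commute (b.choose k) (E * X ^ k)).eq]
      _ = ((b.choose k : ℕ) : A) * (E * X ^ (a+k)) := by
          rw [mul_assoc _ (E * X ^ k) (X ^ a), mul_assoc E (X ^ k) (X ^ a), ← pow_add,
            Nat.add_comm k a]
      _ = (b.choose k) • (E * X ^ (a+k)) := (nsmul_eq_mul _ _).symm
  have resV : E * X ^ a * Z ^ b * S
      = ∑ k ∈ Finset.range (b+1), (b.choose k) • (E * X ^ (a + k)) := by
    rw [expandV, Finset.sum_mul]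
    refine Finset.sum_congr rfl fun k _ => ?_
    rw [smul_mul_assoc, L5 (a+k)]
  -- expansion for (vi)
  have expandVI : X ^ a * Z ^ b * E
      = ∑ k ∈ Finset.range (a+1), (a.choose k) • (Z ^ (b + k) * E) := by
    have h1 : X ^ a * Z ^ b * E = Z ^ b * (X ^ a * E) := by
      rw [(cXZ.pow_pow a b).eq, mul_assoc]
    rw [h1, L7 a, (Commute.one_right Z).add_pow a, Finset.sum_mul, Finset.mul_sum]
    refine Finset.sum_congr rfl fun k _ => ?_
    calc Z ^ b * (Z ^ k * 1 ^ (a-k) * ((a.choose k : ℕ) : A) * E)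
        = Z ^ b * (Z ^ k * ((a.choose k : ℕ) : A) * E) := by rw [one_pow, mul_one]
      _ = Z ^ b * (((a.choose k : ℕ) : A) * Z ^ k * E) := by
          rw [← (Nat.cast_commute (a.choose k) (Z ^ k)).eq]
      _ = Z ^ b * ((a.choose k : ℕ) : A) * (Z ^ k * E) := by
          rw [mul_assoc _ (Z ^ k) E, ← mul_assoc (Z ^ b) _ (Z ^ k * E)]
      _ = ((a.choose k : ℕ) : A) * Z ^ b * (Z ^ k * E) := by
          rw [← (Nat.cast_commute (a.choose k) (Z ^ b)).eq]
      _ = ((a.choose k : ℕ) : A) * (Z ^ (b+k) * E) := by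
          rw [mul_assoc, ← mul_assoc (Z ^ b) (Z ^ k) E, ← pow_add]
      _ = (a.choose k) • (Z ^ (b+k) * E) := (nsmul_eq_mul _ _).symm
  have resVI : S * X ^ a * Z ^ b * E
      = -∑ k ∈ Finset.range (a+1), (a.choose k) • (Z ^ (b + k) * E) := by
    have h0 : S * X ^ a * Z ^ b * E = S * (X ^ a * Z ^ b * E) := by
      rw [mul_assoc S (X ^ a) (Z ^ b), mul_assoc S (X ^ a * Z ^ b) E]
    rw [h0, expandVI, Finset.mul_sum, ← Finset.sum_neg_distrib]
    refine Finset.sum_congr rfl fun k _ => ?_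
    rw [mul_smul_comm, ← mul_assoc S (Z ^ (b+k)) E, L2 (b+k), smul_neg]
  exact ⟨L2 b, L4 a, (L1 b).1, L5 a, resV, resVI⟩

end Abstract

/-- Lemma "disentangling".  In `sVV n` (`n ≥ 2`), for every `1 ≤ i ≤ n-1`
and all natural numbers `a, b`:
(i)   `s_i y_{i+1}^b e_i = - y_{i+1}^b e_i`;
(ii)  `s_i y_i^a e_i = - y_i^a e_i`;
(iii) `e_i y_{i+1}^b s_i = e_i y_{i+1}^b`;
(iv)  `e_i y_i^a s_i = e_i y_i^a`;
(v)   `e_i y_i^a y_{i+1}^b s_i = Σ_{k=0}^{b} (b choose k) e_i y_i^{a+k}`;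
(vi)  `s_i y_i^a y_{i+1}^b e_i = - Σ_{k=0}^{a} (a choose k) y_{i+1}^{b+k} e_i`. -/
theorem disentangling (n : ℕ) (hn : 2 ≤ n) (i : ℕ) (hi1 : 1 ≤ i) (hi2 : i ≤ n - 1)
    (a b : ℕ) :
    ss n i * yy n (i+1) ^ b * ee n i = -(yy n (i+1) ^ b * ee n i) ∧
    ss n i * yy n i ^ a * ee n i = -(yy n i ^ a * ee n i) ∧
    ee n i * yy n (i+1) ^ b * ss n i = ee n i * yy n (i+1) ^ b ∧
    ee n i * yy n i ^ a * ss n i = ee n i * yy n i ^ a ∧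
    ee n i * yy n i ^ a * yy n (i+1) ^ b * ss n i
      = ∑ k ∈ Finset.range (b+1), (b.choose k) • (ee n i * yy n i ^ (a + k)) ∧
    ss n i * yy n i ^ a * yy n (i+1) ^ b * ee n i
      = -∑ k ∈ Finset.range (a+1), (a.choose k) • (yy n (i+1) ^ (b + k) * ee n i) := by
  have h : 1 ≤ i ∧ i ≤ n - 1 := ⟨hi1, hi2⟩
  have hx : 1 ≤ i ∧ i ≤ n := ⟨hi1, by omega⟩
  have hz : 1 ≤ i + 1 ∧ i + 1 ≤ n := ⟨by omega, by omega⟩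
  have hss : ss n i = sgen n i h := dif_pos h
  have hee : ee n i = egen n i h := dif_pos h
  have hyx : yy n i = ygen n i hx := dif_pos hx
  have hyz : yy n (i+1) = ygen n (i+1) hz := dif_pos hz
  rw [hss, hee, hyx, hyz]
  set S := sgen n i h with hS
  set E := egen n i h with hE
  set X := ygen n i hx with hX
  set Z := ygen n (i+1) hz with hZ
  have hes : E * S = E := by
    simpa [hE, hS, egen, sgen, map_mul] using RingQuot.mkAlgHom_rel ℂ (Rel.es i h)
  have hse : S * E = -E := by
    simpa [hE, hS, egen, sgen, map_mul, map_neg] using RingQuot.mkAlgHom_rel ℂ (Rel.se i h)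
  have he2 : E * E = 0 := by
    simpa [hE, egen, map_mul, map_zero] using RingQuot.mkAlgHom_rel ℂ (Rel.e_sq i h)
  have hsub1 : S * X - Z * S = -E - 1 := by
    simpa [hS, hE, hX, hZ, sgen, egen, ygen, map_mul, map_sub, map_neg, map_one] using
      RingQuot.mkAlgHom_rel ℂ (Rel.sy_rel i h hx hz)
  have hsub2 : X * S - S * Z = E - 1 := by
    simpa [hS, hE, hX, hZ, sgen, egen, ygen, map_mul, map_sub, map_neg, map_one] using
      RingQuot.mkAlgHom_rel ℂ (Rel.ys_rel i h hx hz)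
  have hsub3 : E * X - E * Z = -E := by
    have := RingQuot.mkAlgHom_rel ℂ (Rel.e_ydiff i h hx hz)
    simpa [hS, hE, hX, hZ, sgen, egen, ygen, map_mul, map_sub, map_neg, mul_sub] using this
  have hsub4 : X * E - Z * E = E := by
    have := RingQuot.mkAlgHom_rel ℂ (Rel.ydiff_e i h hx hz)
    simpa [hS, hE, hX, hZ, sgen, egen, ygen, map_mul, map_sub, sub_mul] using this
  have hxz : X * Z = Z * X := by
    simpa [hX, hZ, ygen, map_mul] using RingQuot.mkAlgHom_rel ℂ (Rel.yy_comm i (i+1) hx hz)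
  have hzs : Z * S = S * X + E + 1 := by
    rw [sub_eq_iff_eq_add] at hsub1
    rw [hsub1]; abel
  have hsz : S * Z = X * S - E + 1 := by
    rw [sub_eq_iff_eq_add] at hsub2
    rw [hsub2]; abel
  have hex : E * X = E * Z - E := by
    rw [sub_eq_iff_eq_add] at hsub3
    rw [hsub3]; abel
  have hxe : X * E = Z * E + E := by
    rw [sub_eq_iff_eq_add] at hsub4
    rw [hsub4]; abel
  exact abstract_dis S E X Z hes hse he2 hzs hsz hex hxe hxz a b


end Periplectic
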